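/- The following are equivalent: (i) every prime element of C is maximal, i.e., Spec(C) = Max(C); (ii) Spec(C) with the Zariski topology is a Hausdorff space; (iii) the Zariski topology and the flat topology on Spec(C) coincide. -/

import Mathlib

open CompleteLattice

/-- A complete lattice equipped with a commutator operation, axiomatizing the congruence
lattice of an algebra in a semidegenerate congruence-modular variety whose compact
congruences are closed under the commutator. -/
class CommutatorLattice (C : Type*) [CompleteLattice C] where
  comm : C → C → C
  comm_comm : ∀ a b : C, comm a b = comm b a
  comm_sSup : ∀ (s : Set C) (b : C), comm (sSup s) b = ⨆ a ∈ s, comm a b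
  comm_le_inf : ∀ a b : C, comm a b ≤ a ⊓ b
  comm_top : ∀ a : C, comm a ⊤ = a
  compactlyGenerated : ∀ x : C,
    ∃ s : Set C, (∀ a ∈ s, IsCompactElement a) ∧ sSup s = x
  top_isCompact : IsCompactElement (⊤ : C)
  comm_isCompact : ∀ a b : C, IsCompactElement a → IsCompactElement b →
    IsCompactElement (comm a b)

namespace CommutatorLattice

variable {C : Type*} [CompleteLattice C] [CommutatorLattice C]

/-- The residuation `a → b := ⨆ {c | [a,c] ≤ b}`. -/
def resid (a b : C) : C := sSup {c : C | comm a c ≤ b}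

/-- The annihilator `a⊥ := a → ⊥`. -/
def ann (a : C) : C := resid a ⊥

/-- Iterated commutator: `cpow a n = [a,a]^n`, with the convention `[a,a]^0 = a`.
Note that `[a,b]^n` for `n ≥ 1` equals `cpow (comm a b) (n-1)`. -/
def cpow (a : C) : ℕ → C
  | 0 => a
  | n + 1 => comm (cpow a n) (cpow a n)

/-- Prime elements: `p ≠ ⊤` and `[a,b] ≤ p` implies `a ≤ p` or `b ≤ p`. -/
def IsPrime (p : C) : Prop := p ≠ ⊤ ∧ ∀ a b : C, comm a b ≤ p → a ≤ p ∨ b ≤ p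

/-- The radical `ρ(a) := ⨅ {p prime | a ≤ p}`. -/
def radical (a : C) : C := sInf {p : C | IsPrime p ∧ a ≤ p}

variable (C) in
/-- `C` is semiprime if `ρ(⊥) = ⊥`. -/
def Semiprime : Prop := radical (⊥ : C) = ⊥

variable (C) in
/-- Condition (⋆): for all compact `a`, `b` and all `n ≥ 1` there is `m ≥ 0` with
`[[a,a]^m, [b,b]^m] ≤ [a,b]^n`.  Here `cpow (comm a b) n = [a,b]^(n+1)`, so `n : ℕ`
ranges exactly over the exponents `≥ 1` of the paper. -/
def Star : Prop := ∀ a b : C, IsCompactElement a → IsCompactElement b →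
  ∀ n : ℕ, ∃ m : ℕ, comm (cpow a m) (cpow b m) ≤ cpow (comm a b) n

/-- Pure elements: `t ⊔ a⊥ = ⊤` for every compact `a ≤ t`. -/
def IsPure (t : C) : Prop := ∀ a : C, IsCompactElement a → a ≤ t → t ⊔ ann a = ⊤

/-- w-pure elements: `t ⊔ (a → ρ(⊥)) = ⊤` for every compact `a ≤ t`. -/
def IsWPure (t : C) : Prop :=
  ∀ a : C, IsCompactElement a → a ≤ t → t ⊔ resid a (radical ⊥) = ⊤

/-- Complemented elements. -/
def IsComplEl (a : C) : Prop := ∃ b : C, a ⊔ b = ⊤ ∧ a ⊓ b = ⊥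

/-- Regular elements: joins of sets of complemented elements. -/
def IsRegular (t : C) : Prop := ∃ S : Set C, (∀ a ∈ S, IsComplEl a) ∧ t = sSup S

/-- Max-regular elements: maximal among regular elements distinct from `⊤`. -/
def IsMaxRegular (t : C) : Prop :=
  IsRegular t ∧ t ≠ ⊤ ∧ ∀ u : C, IsRegular u → u ≠ ⊤ → t ≤ u → u = t

/-- Maximal elements of `C \ {⊤}`. -/
def IsMaximal (p : C) : Prop := p ≠ ⊤ ∧ ∀ q : C, q ≠ ⊤ → p ≤ q → q = p

/-- Minimal primes. -/
def IsMinPrime (p : C) : Prop := IsPrime p ∧ ∀ q : C, IsPrime q → q ≤ p → q = p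

variable (C) in
/-- `C` is mp if every prime lies above a unique minimal prime. -/
def MP : Prop := ∀ p : C, IsPrime p → ∃! q : C, IsMinPrime q ∧ q ≤ p

variable (C) in
/-- `C` is PF if `a⊥` is pure for every compact `a`. -/
def PF : Prop := ∀ a : C, IsCompactElement a → IsPure (ann a)

variable (C) in
/-- `C` is PP if `a⊥` is complemented for every compact `a`. -/
def PP : Prop := ∀ a : C, IsCompactElement a → IsComplEl (ann a)

/-- `O(p) := ⨆ {a compact | a⊥ ≰ p}`. -/
def O (p : C) : C := sSup {a : C | IsCompactElement a ∧ ¬ ann a ≤ p}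

variable (C) in
/-- `C` is normal. -/
def Normal : Prop := ∀ t u : C, t ⊔ u = ⊤ →
  ∃ a b : C, t ⊔ a = ⊤ ∧ u ⊔ b = ⊤ ∧ comm a b = ⊥

variable (C) in
/-- `C` is B-normal. -/
def BNormal : Prop := ∀ t u : C, t ⊔ u = ⊤ →
  ∃ a b : C, IsComplEl a ∧ IsComplEl b ∧ t ⊔ a = ⊤ ∧ u ⊔ b = ⊤ ∧ comm a b = ⊥

variable (C) in
/-- `C` is purified. -/
def Purified : Prop := ∀ p q : C, IsMinPrime p → IsMinPrime q → p ≠ q →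
  ∃ a : C, IsComplEl a ∧ a ≤ p ∧ ann a ≤ q

variable (C) in
/-- The prime spectrum of `C`. -/
abbrev Spec := {p : C // IsPrime p}

variable (C) in
/-- The Zariski topology on `Spec C`: the closed sets are the `V(t) = {p | t ≤ p}`,
equivalently the topology generated by the sets `D(t) = {p | t ≰ p}`. -/
def zariskiTop : TopologicalSpace (Spec C) :=
  TopologicalSpace.generateFrom {U : Set (Spec C) | ∃ t : C, U = {p : Spec C | ¬ t ≤ p.1}}

variable (C) in
/-- The flat topology on `Spec C`: generated by the open basis `V(a)`, `a` compact. -/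
def flatTop : TopologicalSpace (Spec C) :=
  TopologicalSpace.generateFrom
    {U : Set (Spec C) | ∃ a : C, IsCompactElement a ∧ U = {p : Spec C | a ≤ p.1}}

section AuxLemmas

variable {C : Type*} [CompleteLattice C] [CommutatorLattice C]

lemma comm_sup_left' (a b c : C) : comm (a ⊔ b) c = comm a c ⊔ comm b c := by
  have h := comm_sSup {a, b} c
  rw [sSup_pair] at h
  rw [h, iSup_pair]

lemma comm_mono_left' {a b : C} (h : a ≤ b) (c : C) : comm a c ≤ comm b c := by
  have h2 := comm_sup_left' a b c
  rw [sup_eq_right.mpr h] at h2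
  rw [h2]; exact le_sup_left

lemma comm_mono' {a b c d : C} (h1 : a ≤ b) (h2 : c ≤ d) : comm a c ≤ comm b d :=
  le_trans (comm_mono_left' h1 c)
    (by rw [comm_comm b c, comm_comm b d]; exact comm_mono_left' h2 b)

lemma comm_sup_sup_le (y b c : C) : comm (y ⊔ b) (y ⊔ c) ≤ y ⊔ comm b c := by
  rw [comm_sup_left']
  have h1 : comm y (y ⊔ c) ≤ y := le_trans (comm_le_inf _ _) inf_le_left
  have h2 : comm b (y ⊔ c) ≤ y ⊔ comm b c := by
    rw [comm_comm, comm_sup_left']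
    exact sup_le (le_trans (comm_le_inf _ _) (le_trans inf_le_left le_sup_left))
      (by rw [comm_comm]; exact le_sup_right)
  exact sup_le (le_trans h1 le_sup_left) h2

lemma isCompactElement_bot' : IsCompactElement (⊥ : C) := by
  rw [isCompactElement_iff_exists_le_sSup_of_le_sSup]
  intro s _
  exact ⟨∅, by simp⟩

lemma isCompactElement_sup' {a b : C} (ha : IsCompactElement a) (hb : IsCompactElement b) :
    IsCompactElement (a ⊔ b) := by
  classical
  rw [isCompactElement_iff_exists_le_sSup_of_le_sSup]
  intro s hs
  obtain ⟨ta, hta, ha'⟩ := (isCompactElement_iff_exists_le_sSup_of_le_sSup (k := a)).mp ha s (le_trans le_sup_left hs)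
  obtain ⟨tb, htb, hb'⟩ := (isCompactElement_iff_exists_le_sSup_of_le_sSup (k := b)).mp hb s (le_trans le_sup_right hs)
  refine ⟨ta ∪ tb, ?_, ?_⟩
  · rw [Finset.coe_union]; exact Set.union_subset hta htb
  · exact sup_le (ha'.trans (Finset.sup_mono Finset.subset_union_left))
      (hb'.trans (Finset.sup_mono Finset.subset_union_right))

lemma sSup_compacts_below (x : C) : sSup {c : C | IsCompactElement c ∧ c ≤ x} = x := by
  obtain ⟨s, hs, hsx⟩ := compactlyGenerated (C := C) x
  apply le_antisymm (sSup_le fun c hc => hc.2)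
  conv_lhs => rw [← hsx]
  refine sSup_le fun c hc => le_sSup ⟨hs c hc, ?_⟩
  rw [← hsx]
  exact le_sSup hc

lemma directedOn_compacts_below (x : C) :
    DirectedOn (· ≤ ·) {c : C | IsCompactElement c ∧ c ≤ x} := by
  rintro a ⟨ha, hax⟩ b ⟨hb, hbx⟩
  exact ⟨a ⊔ b, ⟨isCompactElement_sup' ha hb, sup_le hax hbx⟩, le_sup_left, le_sup_right⟩

lemma exists_compact_le_not_le {t p : C} (h : ¬ t ≤ p) :
    ∃ a : C, IsCompactElement a ∧ a ≤ t ∧ ¬ a ≤ p := by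
  by_contra hc
  push_neg at hc
  apply h
  conv_lhs => rw [← sSup_compacts_below t]
  exact sSup_le fun c hcc => hc c hcc.1 hcc.2

lemma exists_compact_sup_top {a p : C} (h : a ⊔ p = ⊤) :
    ∃ b : C, IsCompactElement b ∧ b ≤ p ∧ a ⊔ b = ⊤ := by
  set S := {c : C | IsCompactElement c ∧ c ≤ p} with hS
  have hT : DirectedOn (· ≤ ·) ((fun c => a ⊔ c) '' S) := by
    rintro _ ⟨x, hx, rfl⟩ _ ⟨y, hy, rfl⟩
    obtain ⟨z, hz, hxz, hyz⟩ := directedOn_compacts_below p x hx y hy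
    exact ⟨a ⊔ z, ⟨z, hz, rfl⟩, sup_le_sup_left hxz _, sup_le_sup_left hyz _⟩
  have hne : ((fun c => a ⊔ c) '' S).Nonempty :=
    ⟨a ⊔ ⊥, Set.mem_image_of_mem _ ⟨isCompactElement_bot', bot_le⟩⟩
  have hle : (⊤ : C) ≤ sSup ((fun c => a ⊔ c) '' S) := by
    rw [← h]
    apply sup_le
    · exact le_trans (le_sup_left : a ≤ a ⊔ ⊥)
        (le_sSup ⟨⊥, ⟨isCompactElement_bot', bot_le⟩, rfl⟩)
    · conv_lhs => rw [← sSup_compacts_below p]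
      exact sSup_le fun c hc => le_trans le_sup_right (le_sSup ⟨c, hc, rfl⟩)
  obtain ⟨_, ⟨b, hb, rfl⟩, htop⟩ :=
    (isCompactElement_iff_le_of_directed_sSup_le _ _).mp top_isCompact _ hne hT hle
  exact ⟨b, hb.1, hb.2, top_le_iff.mp htop⟩

lemma exists_maximal_above {x : C} (h : x ≠ ⊤) : ∃ m : C, IsMaximal m ∧ x ≤ m := by
  have hcond : ∀ c ⊆ {y : C | y ≠ ⊤}, IsChain (· ≤ ·) c → ∀ y ∈ c,
      ∃ ub ∈ {y : C | y ≠ ⊤}, ∀ z ∈ c, z ≤ ub := by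
    intro c hcs hchain y hy
    refine ⟨sSup c, ?_, fun z hz => le_sSup hz⟩
    intro htop
    obtain ⟨z, hzc, hz⟩ := (isCompactElement_iff_le_of_directed_sSup_le _ _).mp
      top_isCompact c ⟨y, hy⟩ hchain.directedOn htop.ge
    exact hcs hzc (top_le_iff.mp hz)
  obtain ⟨m, hxm, hm⟩ := zorn_le_nonempty₀ {y : C | y ≠ ⊤} hcond x h
  exact ⟨m, ⟨hm.1, fun q hq hmq => le_antisymm (hm.2 hq hmq) hmq⟩, hxm⟩

lemma IsMaximal.isPrime {p : C} (hp : IsMaximal p) : IsPrime p := by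
  refine ⟨hp.1, fun a b hab => ?_⟩
  by_contra hcon
  push_neg at hcon
  obtain ⟨ha, hb⟩ := hcon
  have hpa : p ⊔ a = ⊤ := by
    rcases eq_or_ne (p ⊔ a) ⊤ with h | h
    · exact h
    · exact absurd (hp.2 _ h le_sup_left ▸ (le_sup_right : a ≤ p ⊔ a)) ha
  have hpb : p ⊔ b = ⊤ := by
    rcases eq_or_ne (p ⊔ b) ⊤ with h | h
    · exact h
    · exact absurd (hp.2 _ h le_sup_left ▸ (le_sup_right : b ≤ p ⊔ b)) hb
  have htop : (⊤ : C) ≤ p := by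
    calc (⊤ : C) = comm (p ⊔ a) (p ⊔ b) := by rw [hpa, hpb, comm_top]
      _ ≤ p ⊔ comm a b := comm_sup_sup_le p a b
      _ ≤ p := sup_le le_rfl hab
  exact hp.1 (top_le_iff.mp htop)

end AuxLemmas

/-- Auxiliary closure set used in the proof of `crux_lemma`. -/
inductive MemClos {C : Type*} [CompleteLattice C] [CommutatorLattice C] (p a : C) : C → Prop
  | base (c : C) : IsCompactElement c → ¬ c ≤ p → MemClos p a c
  | self : MemClos p a a
  | comm_mem (x y : C) : MemClos p a x → MemClos p a y → MemClos p a (comm x y)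

section Crux

variable {C : Type*} [CompleteLattice C] [CommutatorLattice C]

lemma MemClos.isCompact {p a x : C} (ha : IsCompactElement a) (h : MemClos p a x) :
    IsCompactElement x := by
  induction h with
  | base c hc _ => exact hc
  | self => exact ha
  | comm_mem x y _ _ ihx ihy => exact comm_isCompact _ _ ihx ihy

lemma MemClos.exists_witness {p a x : C} (hp : IsPrime p) (h : MemClos p a x) :
    ∃ u : C, ¬ u ≤ p ∧ ∀ q : C, IsPrime q → x ≤ q → a ≤ q ∨ u ≤ q := by
  induction h with
  | base c _ hcp => exact ⟨c, hcp, fun q _ hq => Or.inr hq⟩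
  | self => exact ⟨⊤, fun ht => hp.1 (top_le_iff.mp ht), fun q _ hq => Or.inl hq⟩
  | comm_mem x y _ _ ihx ihy =>
      obtain ⟨u1, hu1, h1⟩ := ihx
      obtain ⟨u2, hu2, h2⟩ := ihy
      refine ⟨comm u1 u2, fun hle => ?_, fun q hq hxy => ?_⟩
      · rcases hp.2 _ _ hle with h | h
        exacts [hu1 h, hu2 h]
      · rcases hq.2 _ _ hxy with h | h
        · rcases h1 q hq h with h' | h'
          · exact Or.inl h'
          · exact Or.inr (le_trans (le_trans (comm_le_inf u1 u2) inf_le_left) h')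
        · rcases h2 q hq h with h' | h'
          · exact Or.inl h'
          · exact Or.inr (le_trans (le_trans (comm_le_inf u1 u2) inf_le_right) h')

lemma crux_lemma (hmax : {p : C | IsPrime p} = {p : C | IsMaximal p}) {a p : C}
    (ha : IsCompactElement a) (hp : IsPrime p) (hap : a ≤ p) :
    ¬ sInf {q : C | IsPrime q ∧ ¬ a ≤ q} ≤ p := by
  intro hs
  set Y := {y : C | ∀ x : C, MemClos p a x → ¬ x ≤ y} with hY
  have hbot : (⊥ : C) ∈ Y := by
    intro x hx hxbot
    obtain ⟨u, hup, hu⟩ := hx.exists_witness hp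
    apply hup
    refine le_trans (le_sInf fun q hq => ?_) hs
    rcases hu q hq.1 (le_trans hxbot bot_le) with h | h
    · exact absurd h hq.2
    · exact h
  have hcond : ∀ c ⊆ Y, IsChain (· ≤ ·) c → ∀ y ∈ c, ∃ ub ∈ Y, ∀ z ∈ c, z ≤ ub := by
    intro c hcs hchain y hy
    refine ⟨sSup c, ?_, fun z hz => le_sSup hz⟩
    intro x hx hxle
    obtain ⟨z, hzc, hz⟩ := (isCompactElement_iff_le_of_directed_sSup_le _ _).mp
      (hx.isCompact ha) c ⟨y, hy⟩ hchain.directedOn hxle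
    exact hcs hzc x hx hz
  obtain ⟨m, -, hm⟩ := zorn_le_nonempty₀ Y hcond ⊥ hbot
  · have hma : ¬ a ≤ m := hm.1 a MemClos.self
    have hmtop : m ≠ ⊤ := fun h => hma (h ▸ le_top)
    have hmprime : IsPrime m := by
      refine ⟨hmtop, fun b c hbc => ?_⟩
      by_contra hcon
      push_neg at hcon
      obtain ⟨hb, hc⟩ := hcon
      have h1 : ∃ x, MemClos p a x ∧ x ≤ m ⊔ b := by
        by_contra h'
        push_neg at h'
        have hmem : m ⊔ b ∈ Y := fun x hx => h' x hx
        exact hb (le_trans le_sup_right (hm.2 hmem le_sup_left))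
      have h2 : ∃ x, MemClos p a x ∧ x ≤ m ⊔ c := by
        by_contra h'
        push_neg at h'
        have hmem : m ⊔ c ∈ Y := fun x hx => h' x hx
        exact hc (le_trans le_sup_right (hm.2 hmem le_sup_left))
      obtain ⟨x1, hx1, hx1le⟩ := h1
      obtain ⟨x2, hx2, hx2le⟩ := h2
      refine hm.1 (comm x1 x2) (MemClos.comm_mem x1 x2 hx1 hx2) ?_
      calc comm x1 x2 ≤ comm (m ⊔ b) (m ⊔ c) := comm_mono' hx1le hx2le
        _ ≤ m ⊔ comm b c := comm_sup_sup_le m b c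
        _ ≤ m := sup_le le_rfl hbc
    have hmp : m ≤ p := by
      conv_lhs => rw [← sSup_compacts_below m]
      refine sSup_le fun c hc => ?_
      by_contra hcp
      exact hm.1 c (MemClos.base c hc.1 hcp) hc.2
    have hmmax : IsMaximal m := (Set.ext_iff.mp hmax m).mp hmprime
    have hpm : p = m := hmmax.2 p hp.1 hmp
    exact hma (hpm ▸ hap)

end Crux

section Topology

open Topology

variable {C : Type*} [CompleteLattice C] [CommutatorLattice C]

lemma flat_isOpen_V {a : C} (ha : IsCompactElement a) :
    IsOpen[flatTop C] {p : Spec C | a ≤ p.1} := by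
  rw [flatTop]
  exact TopologicalSpace.isOpen_generateFrom_of_mem ⟨a, ha, rfl⟩

lemma zariski_isOpen_D (t : C) : IsOpen[zariskiTop C] {p : Spec C | ¬ t ≤ p.1} := by
  rw [zariskiTop]
  exact TopologicalSpace.isOpen_generateFrom_of_mem ⟨t, rfl⟩

lemma flat_isOpen_mono {U : Set (Spec C)} (hU : IsOpen[flatTop C] U) :
    ∀ p q : Spec C, p.1 ≤ q.1 → p ∈ U → q ∈ U := by
  have h : TopologicalSpace.GenerateOpen
      {U : Set (Spec C) | ∃ a : C, IsCompactElement a ∧ U = {p : Spec C | a ≤ p.1}} U := hU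
  clear hU
  induction h with
  | basic s hs =>
      rintro p q hpq hp
      obtain ⟨a, ha, rfl⟩ := hs
      exact le_trans hp hpq
  | univ => intros; trivial
  | inter s t _ _ ihs iht =>
      rintro p q h ⟨h1, h2⟩
      exact ⟨ihs p q h h1, iht p q h h2⟩
  | sUnion S _ ih =>
      rintro p q h ⟨s, hsS, hp⟩
      exact ⟨s, hsS, ih s hsS p q h hp⟩

lemma zariski_isOpen_antimono {U : Set (Spec C)} (hU : IsOpen[zariskiTop C] U) :
    ∀ p q : Spec C, p.1 ≤ q.1 → q ∈ U → p ∈ U := by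
  have h : TopologicalSpace.GenerateOpen
      {U : Set (Spec C) | ∃ t : C, U = {p : Spec C | ¬ t ≤ p.1}} U := hU
  clear hU
  induction h with
  | basic s hs =>
      rintro p q hpq hq
      obtain ⟨t, rfl⟩ := hs
      exact fun htp => hq (le_trans htp hpq)
  | univ => intros; trivial
  | inter s t _ _ ihs iht =>
      rintro p q h ⟨h1, h2⟩
      exact ⟨ihs p q h h1, iht p q h h2⟩
  | sUnion S _ ih =>
      rintro p q h ⟨s, hsS, hq⟩
      exact ⟨s, hsS, ih s hsS p q h hq⟩

lemma two_to_one (h : @T2Space (Spec C) (zariskiTop C)) :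
    {p : C | IsPrime p} = {p : C | IsMaximal p} := by
  have key : ∀ p : C, IsPrime p → IsMaximal p := by
    intro p hp
    have h2 : ∀ m : C, IsMaximal m → p ≤ m → m = p := by
      intro m hm hpm
      by_contra hne
      have hmp : IsPrime m := hm.isPrime
      have hne' : (⟨p, hp⟩ : Spec C) ≠ ⟨m, hmp⟩ := fun he => hne (congrArg Subtype.val he).symm
      obtain ⟨U, V, hU, hV, hpU, hmV, hdisj⟩ := h.t2 hne'
      have hpV : (⟨p, hp⟩ : Spec C) ∈ V :=
        zariski_isOpen_antimono hV ⟨p, hp⟩ ⟨m, hmp⟩ hpm hmV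
      exact Set.disjoint_left.1 hdisj hpU hpV
    refine ⟨hp.1, fun q hq hpq => ?_⟩
    obtain ⟨m, hm, hqm⟩ := exists_maximal_above hq
    have hmp := h2 m hm (hpq.trans hqm)
    exact le_antisymm (hmp ▸ hqm) hpq
  ext p
  exact ⟨key p, IsMaximal.isPrime⟩

lemma one_to_eq (h : {p : C | IsPrime p} = {p : C | IsMaximal p}) :
    zariskiTop C = flatTop C := by
  have hprime_max : ∀ p : C, IsPrime p → IsMaximal p := fun p hp => (Set.ext_iff.mp h p).mp hp
  apply le_antisymm
  · rw [flatTop]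
    apply le_generateFrom
    rintro s ⟨a, ha, rfl⟩
    have heq : {p : Spec C | a ≤ p.1}
        = {p : Spec C | ¬ sInf {q : C | IsPrime q ∧ ¬ a ≤ q} ≤ p.1} := by
      ext p
      simp only [Set.mem_setOf_eq]
      constructor
      · intro hap
        exact crux_lemma h ha p.2 hap
      · intro hs
        by_contra hap
        exact hs (sInf_le ⟨p.2, hap⟩)
    rw [heq]
    exact zariski_isOpen_D _
  · rw [zariskiTop]
    apply le_generateFrom
    rintro s ⟨t, rfl⟩
    letI : TopologicalSpace (Spec C) := flatTop C
    rw [isOpen_iff_forall_mem_open]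
    rintro p hp
    obtain ⟨a, ha, hat, hap⟩ := exists_compact_le_not_le hp
    have hmax := hprime_max p.1 p.2
    have hsup : a ⊔ p.1 = ⊤ := by
      rcases eq_or_ne (a ⊔ p.1) ⊤ with h' | h'
      · exact h'
      · exact absurd (hmax.2 _ h' le_sup_right ▸ (le_sup_left : a ≤ a ⊔ p.1)) hap
    obtain ⟨b, hb, hbp, hab⟩ := exists_compact_sup_top hsup
    refine ⟨{q : Spec C | b ≤ q.1}, ?_, flat_isOpen_V hb, hbp⟩
    intro q hq htq
    have htop : (⊤ : C) ≤ q.1 := by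
      rw [← hab]
      exact sup_le (le_trans hat htq) hq
    exact q.2.1 (top_le_iff.mp htop)

lemma eq_to_one (h : zariskiTop C = flatTop C) :
    {p : C | IsPrime p} = {p : C | IsMaximal p} := by
  have key : ∀ p m : C, IsPrime p → IsMaximal m → p ≤ m → m = p := by
    intro p m hp hm hpm
    by_contra hne
    have hmp : IsPrime m := hm.isPrime
    have hD : IsOpen[flatTop C] {q : Spec C | ¬ m ≤ q.1} := by
      rw [← h]; exact zariski_isOpen_D m
    have hpD : (⟨p, hp⟩ : Spec C) ∈ {q : Spec C | ¬ m ≤ q.1} := by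
      intro hmp'
      exact hne (le_antisymm hmp' hpm)
    exact flat_isOpen_mono hD ⟨p, hp⟩ ⟨m, hmp⟩ hpm hpD le_rfl
  ext p
  refine ⟨fun hp => ?_, IsMaximal.isPrime⟩
  refine ⟨hp.1, fun q hq hpq => ?_⟩
  obtain ⟨mm, hmm, hqm⟩ := exists_maximal_above hq
  have hmp := key p mm hp hmm (hpq.trans hqm)
  exact le_antisymm (hmp ▸ hqm) hpq

lemma one_to_two (h : {p : C | IsPrime p} = {p : C | IsMaximal p}) :
    @T2Space (Spec C) (zariskiTop C) := by
  have heq := one_to_eq h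
  have hprime_max : ∀ p : C, IsPrime p → IsMaximal p := fun p hp => (Set.ext_iff.mp h p).mp hp
  refine @T2Space.mk _ (zariskiTop C) ?_
  intro p q hne
  have hp := hprime_max p.1 p.2
  have hq := hprime_max q.1 q.2
  have hpq : p.1 ⊔ q.1 = ⊤ := by
    rcases eq_or_ne (p.1 ⊔ q.1) ⊤ with h' | h'
    · exact h'
    · have h2 : q.1 ≤ p.1 := hp.2 _ h' le_sup_left ▸ (le_sup_right : q.1 ≤ p.1 ⊔ q.1)
      exact absurd (Subtype.ext (hq.2 p.1 hp.1 h2)) hne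
  obtain ⟨y, hy, hyq, hpy⟩ := exists_compact_sup_top hpq
  have h2 : y ⊔ p.1 = ⊤ := by rw [sup_comm]; exact hpy
  obtain ⟨x, hx, hxp, hyx⟩ := exists_compact_sup_top h2
  refine ⟨{r : Spec C | x ≤ r.1}, {r : Spec C | y ≤ r.1}, ?_, ?_, hxp, hyq, ?_⟩
  · rw [heq]; exact flat_isOpen_V hx
  · rw [heq]; exact flat_isOpen_V hy
  · rw [Set.disjoint_left]
    intro r hxr hyr
    have htop : (⊤ : C) ≤ r.1 := by
      rw [← hyx]
      exact sup_le hyr hxr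
    exact r.2.1 (top_le_iff.mp htop)

end Topology

theorem statement8 :
    ({p : C | IsPrime p} = {p : C | IsMaximal p} ↔ @T2Space (Spec C) (zariskiTop C)) ∧
    (@T2Space (Spec C) (zariskiTop C) ↔ zariskiTop C = flatTop C) :=
  ⟨⟨one_to_two, two_to_one⟩,
    ⟨fun h => one_to_eq (two_to_one h), fun h => one_to_two (eq_to_one h)⟩⟩

end CommutatorLattice
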